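/- Fix a step t, fix real coefficients α_1,…,α_{t−1} with Z_t > 0, and assume 0 < R̃_t < 1. If α_t = (1/2)·ln((1 − R̃_t)/R̃_t) is the optimal t-th coefficient, then the next normalization factor satisfies Z_{t+1} = 2·e^{−α_t}·(1 − R̃_t)·Z_t = 2·√(R̃_t·(1 − R̃_t))·Z_t. -/

import Mathlib

open Finset

noncomputable section

/-- The sign factor `(-1)^s` of a bit, where `s = true` encodes the bit `1`
(meaning the classifier errs on the input). -/
def sgn (s : Bool) : ℝ := if s then -1 else 1

/-- The joint probability `q(s_k, x) = p(x) · ∏_{i=1}^k q_i(s_i | x)` of drawing the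
input `x` and the classifiers `1, …, k` producing the error-indicator string `s`. -/
def jointProb {Ω : Type*} (p : Ω → ℝ) (q : ℕ → Ω → Bool → ℝ) (k : ℕ)
    (x : Ω) (s : Fin k → Bool) : ℝ :=
  p x * ∏ i : Fin k, q i x (s i)

/-- The (unnormalized) weight `w^x_{s_k} = ∏_{i=1}^k exp(-α_i · (-1)^{s_i})` of a branch. -/
def wgt {k : ℕ} (α : Fin k → ℝ) (s : Fin k → Bool) : ℝ :=
  ∏ i : Fin k, Real.exp (-(α i) * sgn (s i))

/-- The exponential cost `C_k(α₁, …, α_k) = ∑_{x, s_k} q(s_k, x) ∏_i exp(-α_i (-1)^{s_i})`. -/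
def cost {Ω : Type*} [Fintype Ω] (p : Ω → ℝ) (q : ℕ → Ω → Bool → ℝ) (k : ℕ)
    (α : Fin k → ℝ) : ℝ :=
  ∑ x : Ω, ∑ s : Fin k → Bool, jointProb p q k x s * wgt α s

/-- The normalization factor `Z_{k+1} = ∑_{x, s_k} q(s_k, x) · w^x_{s_k}`
(so that `Z_1 = ∑_x p x = 1` for the empty string). -/
def Znorm {Ω : Type*} [Fintype Ω] (p : Ω → ℝ) (q : ℕ → Ω → Bool → ℝ) (k : ℕ)
    (α : Fin k → ℝ) : ℝ :=
  ∑ x : Ω, ∑ s : Fin k → Bool, jointProb p q k x s * wgt α s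

/-- The weighted error `R̃_{k+1}` of the `(k+1)`-st classifier (0-indexed: classifier `q k`),
given the coefficients `α₁, …, α_k` of the previous classifiers. -/
def Rerr {Ω : Type*} [Fintype Ω] (p : Ω → ℝ) (q : ℕ → Ω → Bool → ℝ) (k : ℕ)
    (α : Fin k → ℝ) : ℝ :=
  (∑ x : Ω, ∑ s : Fin k → Bool, jointProb p q k x s * wgt α s * q k x true) /
    Znorm p q k α

/-- Fix a step `t = k+1` and coefficients `α₁, …, α_k` with `Z_{k+1} > 0`,
and assume `0 < R̃_{k+1} < 1`. If `a = (1/2)·ln((1 - R̃_{k+1})/R̃_{k+1})` is the optimal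
`(k+1)`-st coefficient, then the next normalization factor satisfies
`Z_{k+2} = 2·e^{-a}·(1 - R̃_{k+1})·Z_{k+1} = 2·√(R̃_{k+1}(1 - R̃_{k+1}))·Z_{k+1}`. -/
theorem adaboost_next_normalization
    {Ω : Type*} [Fintype Ω] (p : Ω → ℝ) (q : ℕ → Ω → Bool → ℝ) (T k : ℕ)
    (ht : k + 1 ≤ T)
    (hp : ∀ x : Ω, 0 ≤ p x ∧ p x ≤ 1) (hpsum : ∑ x : Ω, p x = 1)
    (hq : ∀ i < T, ∀ x : Ω, (0 ≤ q i x false ∧ q i x false ≤ 1) ∧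
      (0 ≤ q i x true ∧ q i x true ≤ 1) ∧ q i x false + q i x true = 1)
    (α : Fin k → ℝ)
    (hZ : 0 < Znorm p q k α)
    (R : ℝ) (hR : R = Rerr p q k α) (hR0 : 0 < R) (hR1 : R < 1)
    (a : ℝ) (ha : a = (1 / 2) * Real.log ((1 - R) / R)) :
    Znorm p q (k + 1) (Fin.snoc α a) = 2 * Real.exp (-a) * (1 - R) * Znorm p q k α ∧
    Znorm p q (k + 1) (Fin.snoc α a) = 2 * Real.sqrt (R * (1 - R)) * Znorm p q k α := by
  have hkT : k < T := ht
  have hR1' : 0 < 1 - R := by linarith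
  set Z := Znorm p q k α with hZdef
  -- split sums
  have hsplit : ∀ (F : (Fin (k+1) → Bool) → ℝ),
      ∑ s : Fin (k+1) → Bool, F s
        = ∑ b : Bool, ∑ s : Fin k → Bool, F (Fin.snoc s b) := by
    intro F
    rw [← Equiv.sum_comp (Fin.snocEquiv fun _ => Bool) F, Fintype.sum_prod_type]
    rfl
  have hjp : ∀ (x : Ω) (s : Fin k → Bool) (b : Bool),
      jointProb p q (k+1) x (Fin.snoc s b) = jointProb p q k x s * q k x b := by
    intro x s b
    simp only [jointProb, Fin.prod_univ_castSucc, Fin.snoc_castSucc, Fin.snoc_last,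
      Fin.coe_castSucc, Fin.val_last]
    ring
  have hw : ∀ (s : Fin k → Bool) (b : Bool),
      wgt (Fin.snoc α a) (Fin.snoc s b) = wgt α s * Real.exp (-a * sgn b) := by
    intro s b
    simp only [wgt, Fin.prod_univ_castSucc, Fin.snoc_castSucc, Fin.snoc_last,
      Fin.coe_castSucc, Fin.val_last]
  -- the true-branch sum
  have hA : (∑ x : Ω, ∑ s : Fin k → Bool, jointProb p q k x s * wgt α s * q k x true)
      = R * Z := by
    rw [hR, Rerr, ← hZdef]
    field_simp
  have hqf : ∀ x : Ω, q k x false = 1 - q k x true := by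
    intro x; have := (hq k hkT x).2.2; linarith
  have hBsum : (∑ x : Ω, ∑ s : Fin k → Bool, jointProb p q k x s * wgt α s * q k x false)
      = (1 - R) * Z := by
    have : ∀ x : Ω, ∑ s : Fin k → Bool, jointProb p q k x s * wgt α s * q k x false
        = (∑ s : Fin k → Bool, jointProb p q k x s * wgt α s)
          - ∑ s : Fin k → Bool, jointProb p q k x s * wgt α s * q k x true := by
      intro x
      rw [← Finset.sum_sub_distrib]
      refine Finset.sum_congr rfl fun s _ => ?_
      rw [hqf x]; ring
    rw [Finset.sum_congr rfl fun x _ => this x, Finset.sum_sub_distrib, hA]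
    have hZZ : (∑ x : Ω, ∑ s : Fin k → Bool, jointProb p q k x s * wgt α s) = Z := rfl
    rw [hZZ]; ring
  -- main expansion of Z_{k+2}
  have hmain : Znorm p q (k+1) (Fin.snoc α a)
      = Real.exp a * (R * Z) + Real.exp (-a) * ((1 - R) * Z) := by
    unfold Znorm
    rw [Finset.sum_congr rfl fun x _ => hsplit
      (fun s => jointProb p q (k+1) x s * wgt (Fin.snoc α a) s)]
    simp only [Fintype.sum_bool, hjp, hw, sgn, if_true, if_false,
      neg_mul, mul_neg, neg_neg, mul_one]
    rw [Finset.sum_add_distrib, ← hBsum, ← hA, Finset.mul_sum, Finset.mul_sum]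
    congr 1 <;> refine Finset.sum_congr rfl fun x _ => ?_ <;>
      rw [Finset.mul_sum] <;> refine Finset.sum_congr rfl fun s _ => ?_ <;> norm_num <;> ring
  have h2a : Real.exp (2 * a) = (1 - R) / R := by
    rw [ha, show 2 * ((1/2 : ℝ) * Real.log ((1 - R)/R)) = Real.log ((1 - R)/R) by ring]
    exact Real.exp_log (by positivity)
  have hea : Real.exp a * R = Real.exp (-a) * (1 - R) := by
    have h1 : Real.exp a = Real.exp (-a) * Real.exp (2 * a) := by
      rw [← Real.exp_add]; ring_nf
    rw [h1, h2a]
    field_simp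
  have heq1 : Znorm p q (k+1) (Fin.snoc α a) = 2 * Real.exp (-a) * (1 - R) * Z := by
    rw [hmain]
    calc Real.exp a * (R * Z) + Real.exp (-a) * ((1 - R) * Z)
        = (Real.exp a * R) * Z + Real.exp (-a) * ((1 - R) * Z) := by ring
      _ = 2 * Real.exp (-a) * (1 - R) * Z := by rw [hea]; ring
  refine ⟨heq1, ?_⟩
  have hsq : R * (1 - R) = (Real.exp (-a) * (1 - R))^2 := by
    have hneg : Real.exp (-a) ^ 2 = R / (1 - R) := by
      rw [sq, ← Real.exp_add, show -a + -a = -(2*a) by ring, Real.exp_neg, h2a]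
      rw [inv_div]
    rw [mul_pow, hneg]
    field_simp
  rw [heq1, hsq, Real.sqrt_sq (by positivity)]; ring
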